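/- There exist positive integers n1, n2 with n1 + n2 = 11 and a successful two-stage coding algorithm for the Z-channel of total length 11 correcting 1 asymmetric error whose message set has size 329. -/

import Mathlib

/-- Hamming weight of a binary word: the number of ones. -/
def wt {n : ℕ} (a : Fin n → Bool) : ℕ :=
  (Finset.univ.filter (fun i => a i = true)).card

/-- N(a,b) = number of positions where a is 0 and b is 1. -/
def NN {n : ℕ} (a b : Fin n → Bool) : ℕ :=
  (Finset.univ.filter (fun i => a i = false ∧ b i = true)).card

/-- The Z-distance d_Z(a,b) = max(N(a,b), N(b,a)). -/
def dZ {n : ℕ} (a b : Fin n → Bool) : ℕ := max (NN a b) (NN b a)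

/-- A code correcting one asymmetric error: d_Z(a,b) ≥ 2 for distinct codewords. -/
def IsZCode {n : ℕ} (C : Finset (Fin n → Bool)) : Prop :=
  ∀ a ∈ C, ∀ b ∈ C, a ≠ b → 2 ≤ dZ a b

/-- The output ball B_1(a): words obtainable from a by at most one asymmetric (1→0) error. -/
def ball {n : ℕ} (a : Fin n → Bool) : Finset (Fin n → Bool) :=
  Finset.univ.filter (fun y => (∀ i, y i ≤ a i) ∧ wt a - wt y ≤ 1)

/-- The number of free points of a code: words lying in no ball B_1(a), a ∈ C. -/
def freeCount {n : ℕ} (C : Finset (Fin n → Bool)) : ℕ :=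
  (Finset.univ.filter (fun y => ∀ a ∈ C, y ∉ ball a)).card

/-- A two-stage coding algorithm (c1, c2, dec) of lengths n1, n2 with message set `Fin M`
is successful if it correctly decodes under at most one asymmetric error in total. -/
def TwoStageSuccess (n1 n2 M : ℕ)
    (c1 : Fin M → (Fin n1 → Bool))
    (c2 : Fin M → (Fin n1 → Bool) → (Fin n2 → Bool))
    (dec : (Fin n1 → Bool) → (Fin n2 → Bool) → Fin M) : Prop :=
  ∀ (m : Fin M) (y1 : Fin n1 → Bool) (y2 : Fin n2 → Bool),
    (∀ i, y1 i ≤ c1 m i) → (∀ i, y2 i ≤ c2 m y1 i) →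
    (wt (c1 m) - wt y1) + (wt (c2 m y1) - wt y2) ≤ 1 →
    dec y1 y2 = m

set_option maxRecDepth 8000
namespace TS329

def L : List ℕ := [0, 1, 2, 16, 32, 48, 49, 50, 64, 80, 81, 96, 97, 98, 112, 113, 128, 144, 145, 146, 160, 161, 176, 192, 193, 194, 208, 209, 224, 225, 240, 241, 242, 256, 272, 273, 274, 288, 289, 304, 305, 320, 321, 322, 336, 352, 353, 368, 369, 370, 384, 385, 400, 401, 416, 417, 418, 432, 433, 434, 448, 449, 464, 465, 466, 480, 481, 482, 496, 497, 498, 512, 528, 529, 544, 545, 546, 560, 561, 576, 577, 592, 593, 594, 608, 624, 625, 626, 640, 641, 642, 656, 657, 672, 673, 688, 689, 690, 704, 720, 721, 722, 736, 737, 738, 752, 753, 754, 768, 769, 770, 784, 785, 800, 801, 816, 817, 818, 832, 848, 849, 850, 864, 865, 866, 880, 881, 882, 896, 897, 912, 913, 914, 928, 929, 930, 944, 945, 946, 960, 961, 962, 976, 977, 978, 992, 993, 994, 1008, 1009, 1010, 1011, 1024, 1025, 1040, 1041, 1056, 1057, 1072, 1073, 1088, 1089, 1104, 1105, 1106, 1120,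 1121, 1136, 1137, 1138, 1152, 1153, 1168, 1169, 1184, 1185, 1186, 1200, 1201, 1202, 1216, 1217, 1232, 1233, 1234, 1248, 1249, 1250, 1264, 1265, 1266, 1280, 1281, 1296, 1297, 1312, 1313, 1314, 1328, 1329, 1330, 1344, 1345, 1360, 1361, 1362, 1376, 1377, 1378, 1392, 1393, 1394, 1408, 1409, 1410, 1424, 1425, 1426, 1456, 1457, 1458, 1472, 1473, 1474, 1488, 1489, 1490, 1504, 1505, 1506, 1520, 1521, 1522, 1523, 1536, 1537, 1552, 1553, 1554, 1568, 1569, 1584, 1585, 1586, 1600, 1601, 1602, 1632, 1633, 1634, 1648, 1649, 1650, 1664, 1665, 1680, 1681, 1682, 1696, 1697, 1698, 1712, 1713, 1714, 1728, 1729, 1730, 1744, 1745, 1746, 1760, 1761, 1762, 1776, 1777, 1778, 1779, 1792, 1793, 1808, 1809, 1810, 1824, 1825, 1826, 1840, 1841, 1842, 1856, 1857, 1858, 1872, 1873, 1874, 1888, 1889, 1890, 1904, 1905, 1906, 1907, 1920, 1921, 1922, 1936, 1937, 1938, 1952, 1953, 1954, 1968, 1969, 1970, 1971, 1984, 1985,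 1986, 2000, 2001, 2002, 2003, 2016, 2017, 2018, 2019, 2032, 2033, 2034, 2035]

def M : List ℕ := [3, 1, 1, 3, 1, 2, 3, 2, 1, 3, 2, 1, 3, 2, 2, 3, 1, 3, 2, 2, 3, 1, 2, 3, 2, 2, 3, 3, 2, 3, 3, 3, 1, 2, 3, 2, 2, 3, 1, 3, 3, 2, 2, 3, 1, 3, 3, 3, 3, 2, 2, 3, 1, 3, 3, 3, 2, 3, 3, 3, 3, 3, 3, 4, 2, 2, 2, 2, 2, 3, 2, 3, 2, 2, 3, 3, 2, 3, 3, 3, 2, 2, 3, 3, 2, 3, 3, 3, 3, 3, 0, 3, 3, 3, 3, 4, 2, 3, 2, 3, 3, 0, 3, 3, 2, 3, 3, 3, 3, 3, 3, 4, 2, 3, 3, 3, 3, 3, 3, 4, 3, 3, 3, 4, 3, 4, 4, 4]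

lemma hLlen : L.length = 329 := by decide

def decF (n v : ℕ) : Fin n → Bool := fun i => v.testBit i
def encF {n : ℕ} (a : Fin n → Bool) : ℕ := ∑ i : Fin n, cond (a i) (2^(i:ℕ)) 0

def A (k : ℕ) : ℕ := [0,12,3,15].getD k 0
def ballB (a y : ℕ) : Bool := (y == a) || (decide (y < a) && ((y ||| a) == a) && ([1,2,4,8].contains (a - y)))
def blockedP (v y : ℕ) : Prop := ∃ k < M.getD v 0, ballB (A k) y = true

instance (v y : ℕ) : Decidable (blockedP v y) := by unfold blockedP; exact inferInstance

def freeL (v : ℕ) : List ℕ := (List.range 16).filter (fun y => !(decide (blockedP v y)))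
def pcovL (v : ℕ) : List ℕ :=
  (List.range 7).flatMap (fun i =>
    if v &&& 2^i = 0 then
      (List.range (min 4 (M.getD (v + 2^i) 0))).map (fun k => 16*(v + 2^i) + k)
    else [])
def pcov (v : ℕ) : Finset ℕ := (pcovL v).toFinset
def rk (e v : ℕ) : ℕ := ((pcov v).filter (fun d => d < e)).card
def gval (e v : ℕ) : ℕ := (freeL v).getD (rk e v) 0

def sortB : List ℕ → Bool
  | [] => true
  | [_] => true
  | x :: y :: t => decide (x < y) && sortB (y :: t)

set_option maxHeartbeats 2000000

lemma chk1 : ∀ e ∈ L, e / 16 < 128 ∧ e % 16 < M.getD (e / 16) 0 ∧ e % 16 < 4 := by decide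
lemma chk2 : sortB L = true := by decide
lemma chk3 : ∀ v < 128, (pcov v).card ≤ (freeL v).length := by decide
lemma chk4 : ∀ k < 4, A k < 16 := by decide
lemma chk5 : ∀ k < 4, ∀ k' < 4, ∀ w < 16, ballB (A k) w = true → ballB (A k') w = true → k = k' := by decide
lemma chkBall : ∀ k < 4, ∀ j < 4, (A k).testBit j = true → ballB (A k) (A k - 2 ^ j) = true := by decide
lemma chkAself : ∀ k < 4, ballB (A k) (A k) = true := by decide
lemma chk6 : ∀ v < 128, encF (decF 7 v) = v := by decide
lemma chk7 : ∀ a < 16, encF (decF 4 a) = a := by decide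
lemma chk8 : ∀ a : Fin 7 → Bool, decF 7 (encF a) = a := by decide
lemma chk9 : ∀ a : Fin 4 → Bool, decF 4 (encF a) = a := by decide

set_option maxHeartbeats 1000000

lemma ones_subset {n : ℕ} {y a : Fin n → Bool} (h : ∀ i, y i ≤ a i) :
    Finset.univ.filter (fun i => y i = true) ⊆ Finset.univ.filter (fun i => a i = true) := by
  intro i hi
  simp only [Finset.mem_filter, Finset.mem_univ, true_and] at hi ⊢
  have hl := h i
  rw [hi] at hl
  revert hl; cases a i <;> simp

lemma wt_le {n : ℕ} {y a : Fin n → Bool} (h : ∀ i, y i ≤ a i) : wt y ≤ wt a :=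
  Finset.card_le_card (ones_subset h)

lemma drop0 {n : ℕ} {y a : Fin n → Bool} (h : ∀ i, y i ≤ a i) (h0 : wt a - wt y = 0) : y = a := by
  have hle := wt_le h
  have hcard : wt a ≤ wt y := by omega
  have heq := Finset.eq_of_subset_of_card_le (ones_subset h) hcard
  funext i
  have hmem : (i ∈ Finset.univ.filter (fun i => y i = true)) ↔
      (i ∈ Finset.univ.filter (fun i => a i = true)) := by rw [heq]
  simp only [Finset.mem_filter, Finset.mem_univ, true_and] at hmem
  cases hy : y i <;> cases ha : a i <;> simp_all

lemma drop1 {n : ℕ} {y a : Fin n → Bool} (h : ∀ i, y i ≤ a i) (h1 : wt a - wt y = 1) :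
    ∃ i, a i = true ∧ y i = false ∧ ∀ j, j ≠ i → y j = a j := by
  have hsub := ones_subset h
  have hle := wt_le h
  have hcard : ((Finset.univ.filter (fun i => a i = true)) \
      (Finset.univ.filter (fun i => y i = true))).card = 1 := by
    rw [Finset.card_sdiff_of_subset hsub]
    unfold wt at h1 hle
    omega
  obtain ⟨i, hi⟩ := Finset.card_eq_one.mp hcard
  have himem : i ∈ (Finset.univ.filter (fun i => a i = true)) \
      (Finset.univ.filter (fun i => y i = true)) := hi ▸ Finset.mem_singleton_self i
  rw [Finset.mem_sdiff, Finset.mem_filter, Finset.mem_filter] at himem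
  refine ⟨i, himem.1.2, ?_, ?_⟩
  · have := himem.2
    cases hy : y i
    · rfl
    · exact absurd ⟨Finset.mem_univ i, hy⟩ this
  · intro j hj
    by_cases hjS : y j = true
    · have hjT : j ∈ Finset.univ.filter (fun i => a i = true) :=
        hsub (Finset.mem_filter.mpr ⟨Finset.mem_univ j, hjS⟩)
      rw [Finset.mem_filter] at hjT
      rw [hjS, hjT.2]
    · by_cases hjT : a j = true
      · exfalso
        have : j ∈ (Finset.univ.filter (fun i => a i = true)) \
            (Finset.univ.filter (fun i => y i = true)) := by
          rw [Finset.mem_sdiff, Finset.mem_filter, Finset.mem_filter]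
          exact ⟨⟨Finset.mem_univ j, hjT⟩, fun hc => hjS hc.2⟩
        rw [hi, Finset.mem_singleton] at this
        exact hj this
      · rw [Bool.not_eq_true] at hjS hjT
        rw [hjS, hjT]

lemma enc_split {n : ℕ} {y a : Fin n → Bool} {i : Fin n} (hai : a i = true) (hyi : y i = false)
    (hrest : ∀ j, j ≠ i → y j = a j) : encF a = 2^(i:ℕ) + encF y := by
  have hsum : ∑ j ∈ Finset.univ.erase i, cond (y j) (2^(j:ℕ)) 0
      = ∑ j ∈ Finset.univ.erase i, cond (a j) (2^(j:ℕ)) 0 :=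
    Finset.sum_congr rfl (fun j hj => by rw [hrest j (Finset.mem_erase.mp hj).1])
  unfold encF
  rw [← Finset.add_sum_erase Finset.univ (fun j => cond (a j) (2^((j:Fin n):ℕ)) 0) (Finset.mem_univ i),
      ← Finset.add_sum_erase Finset.univ (fun j => cond (y j) (2^((j:Fin n):ℕ)) 0) (Finset.mem_univ i),
      hai, hyi, hsum]
  simp

lemma encF_lt7 (a : Fin 7 → Bool) : encF a < 128 := by
  have h1 : encF a ≤ ∑ i : Fin 7, 2^(i:ℕ) :=
    Finset.sum_le_sum (fun i _ => by cases a i <;> simp)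
  have h2 : (∑ i : Fin 7, 2^(i:ℕ)) = 127 := by decide
  omega

lemma encF_lt4 (a : Fin 4 → Bool) : encF a < 16 := by
  have h1 : encF a ≤ ∑ i : Fin 4, 2^(i:ℕ) :=
    Finset.sum_le_sum (fun i _ => by cases a i <;> simp)
  have h2 : (∑ i : Fin 4, 2^(i:ℕ)) = 15 := by decide
  omega

lemma sortB_sorted : ∀ l : List ℕ, sortB l = true → l.Pairwise (· < ·)
  | [] => fun _ => List.Pairwise.nil
  | [a] => fun _ => List.pairwise_singleton _ a
  | x :: y :: t => fun h => by
      rw [sortB, Bool.and_eq_true, decide_eq_true_iff] at h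
      have ih := sortB_sorted (y :: t) h.2
      refine List.pairwise_cons.mpr ⟨?_, ih⟩
      intro b hb
      rcases List.mem_cons.mp hb with hb | hb
      · rw [hb]; exact h.1
      · exact lt_trans h.1 ((List.pairwise_cons.mp ih).1 b hb)

lemma hNodup : L.Nodup := (sortB_sorted L chk2).nodup

def eOf (m : Fin 329) : ℕ := L.get (Fin.cast hLlen.symm m)

lemma eOf_mem (m : Fin 329) : eOf m ∈ L := List.get_mem _ _

lemma eOf_inj {m m' : Fin 329} (h : eOf m = eOf m') : m = m' := by
  have := List.nodup_iff_injective_get.mp hNodup h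
  have hv := congrArg Fin.val this
  exact Fin.ext hv

def c1 (m : Fin 329) : Fin 7 → Bool := decF 7 (eOf m / 16)

def c2 (m : Fin 329) (y1 : Fin 7 → Bool) : Fin 4 → Bool :=
  if y1 = c1 m then decF 4 (A (eOf m % 16)) else decF 4 (gval (eOf m) (encF y1))

lemma mem_pcovL {v e : ℕ} (i : Fin 7) (h1 : v.testBit (i:ℕ) = false)
    (hu : e / 16 = v + 2^(i:ℕ)) (hk : e % 16 < M.getD (e/16) 0) (hk4 : e % 16 < 4) :
    e ∈ pcovL v := by
  unfold pcovL
  rw [List.mem_flatMap]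
  refine ⟨(i:ℕ), List.mem_range.mpr i.isLt, ?_⟩
  have hand : v &&& 2^(i:ℕ) = 0 := by
    rw [Nat.and_two_pow, h1]
    simp
  rw [if_pos hand, List.mem_map]
  refine ⟨e % 16, List.mem_range.mpr (lt_min hk4 (by rw [← hu]; exact hk)), by omega⟩

lemma gval_mem {e v : ℕ} (hv : v < 128) (he : e ∈ pcov v) :
    rk e v < (freeL v).length ∧ gval e v ∈ freeL v := by
  have h1 : rk e v < (pcov v).card := by
    apply Finset.card_lt_card
    constructor
    · exact Finset.filter_subset _ _
    · intro hsub
      have := hsub he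
      rw [Finset.mem_filter] at this
      exact absurd this.2 (lt_irrefl e)
  have h2 := lt_of_lt_of_le h1 (chk3 v hv)
  refine ⟨h2, ?_⟩
  rw [gval, List.getD_eq_get _ _ ⟨_, h2⟩]
  exact List.get_mem _ _

lemma freeL_mem {v y : ℕ} (h : y ∈ freeL v) : y < 16 ∧ ¬ blockedP v y := by
  unfold freeL at h
  rw [List.mem_filter] at h
  refine ⟨List.mem_range.mp h.1, ?_⟩
  have := h.2
  simpa using this

lemma freeL_nodup (v : ℕ) : (freeL v).Nodup := (List.nodup_range (n := 16)).filter _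

lemma rk_inj_aux {s : Finset ℕ} {a b : ℕ} (ha : a ∈ s) (hab : a < b) :
    (s.filter (fun d => d < a)).card < (s.filter (fun d => d < b)).card := by
  apply Finset.card_lt_card
  constructor
  · intro d hd
    rw [Finset.mem_filter] at *
    exact ⟨hd.1, lt_trans hd.2 hab⟩
  · intro hsub
    have hmem : a ∈ s.filter (fun d => d < b) := Finset.mem_filter.mpr ⟨ha, hab⟩
    have := hsub hmem
    rw [Finset.mem_filter] at this
    exact absurd this.2 (lt_irrefl a)

lemma rk_inj {v a b : ℕ} (ha : a ∈ pcov v) (hb : b ∈ pcov v) (h : rk a v = rk b v) : a = b := by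
  rcases lt_trichotomy a b with hl | he | hl
  · exact absurd h (Nat.ne_of_lt (rk_inj_aux ha hl))
  · exact he
  · exact absurd h.symm (Nat.ne_of_lt (rk_inj_aux hb hl))

lemma classify {y1 : Fin 7 → Bool} {y2 : Fin 4 → Bool} {m : Fin 329}
    (h1 : ∀ i, y1 i ≤ c1 m i) (h2 : ∀ i, y2 i ≤ c2 m y1 i)
    (h3 : (wt (c1 m) - wt y1) + (wt (c2 m y1) - wt y2) ≤ 1) :
    (y1 = c1 m ∧ encF y1 = eOf m / 16 ∧ ballB (A (eOf m % 16)) (encF y2) = true) ∨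
    (y1 ≠ c1 m ∧ eOf m ∈ pcov (encF y1) ∧ encF y2 = gval (eOf m) (encF y1)) := by
  obtain ⟨hu128, hkM, hk4⟩ := chk1 _ (eOf_mem m)
  have hd1 : wt (c1 m) - wt y1 = 0 ∨ wt (c1 m) - wt y1 = 1 := by omega
  rcases hd1 with hd1 | hd1
  · left
    have hy1 : y1 = c1 m := drop0 h1 hd1
    have hv : encF y1 = eOf m / 16 := by rw [hy1]; exact chk6 _ hu128
    refine ⟨hy1, hv, ?_⟩
    have hc2 : c2 m y1 = decF 4 (A (eOf m % 16)) := by rw [c2, if_pos hy1]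
    rw [hc2] at h2 h3
    have hAlt : A (eOf m % 16) < 16 := chk4 _ hk4
    have henc : encF (decF 4 (A (eOf m % 16))) = A (eOf m % 16) := chk7 _ hAlt
    have hd2 : wt (decF 4 (A (eOf m % 16))) - wt y2 = 0 ∨
        wt (decF 4 (A (eOf m % 16))) - wt y2 = 1 := by omega
    rcases hd2 with hd2 | hd2
    · have hy2 := drop0 h2 hd2
      rw [hy2, henc]
      exact chkAself _ hk4
    · obtain ⟨j, hj1, hj2, hj3⟩ := drop1 h2 hd2
      have hsplit := enc_split hj1 hj2 hj3
      rw [henc] at hsplit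
      have hbit : (A (eOf m % 16)).testBit (j:ℕ) = true := hj1
      have heq : encF y2 = A (eOf m % 16) - 2^(j:ℕ) := by omega
      rw [heq]
      exact chkBall _ hk4 _ j.isLt hbit
  · right
    have hd2 : wt (c2 m y1) - wt y2 = 0 := by omega
    obtain ⟨i, hi1, hi2, hi3⟩ := drop1 h1 hd1
    have hne : y1 ≠ c1 m := by
      intro he
      rw [he, hi1] at hi2
      exact Bool.noConfusion hi2
    have hsplit := enc_split hi1 hi2 hi3
    have hencu : encF (c1 m) = eOf m / 16 := chk6 _ hu128
    have hbitv : (encF y1).testBit (i:ℕ) = false := by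
      have hdec : decF 7 (encF y1) i = y1 i := congrFun (chk8 y1) i
      rw [← hdec] at hi2
      exact hi2
    have hmem : eOf m ∈ pcov (encF y1) := by
      rw [pcov, List.mem_toFinset]
      exact mem_pcovL i hbitv (by omega) hkM hk4
    refine ⟨hne, hmem, ?_⟩
    have hc2 : c2 m y1 = decF 4 (gval (eOf m) (encF y1)) := by rw [c2, if_neg hne]
    rw [hc2] at h2
    rw [hc2] at hd2
    have hy2 : y2 = decF 4 (gval (eOf m) (encF y1)) := drop0 h2 hd2
    have hg16 : gval (eOf m) (encF y1) < 16 :=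
      (freeL_mem (gval_mem (encF_lt7 y1) hmem).2).1
    rw [hy2]
    exact chk7 _ hg16

def Plaus (y1 : Fin 7 → Bool) (y2 : Fin 4 → Bool) (m : Fin 329) : Prop :=
  (∀ i, y1 i ≤ c1 m i) ∧ (∀ i, y2 i ≤ c2 m y1 i) ∧
    (wt (c1 m) - wt y1) + (wt (c2 m y1) - wt y2) ≤ 1

instance (y1 : Fin 7 → Bool) (y2 : Fin 4 → Bool) (m : Fin 329) : Decidable (Plaus y1 y2 m) := by
  unfold Plaus; exact inferInstance

lemma uniq {y1 : Fin 7 → Bool} {y2 : Fin 4 → Bool} {m m' : Fin 329}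
    (hm : Plaus y1 y2 m) (hm' : Plaus y1 y2 m') : m = m' := by
  obtain ⟨h1, h2, h3⟩ := hm
  obtain ⟨h1', h2', h3'⟩ := hm'
  rcases classify h1 h2 h3 with ⟨ha1, ha2, ha3⟩ | ⟨hb1, hb2, hb3⟩ <;>
    rcases classify h1' h2' h3' with ⟨hc1, hc2, hc3⟩ | ⟨hd1, hd2, hd3⟩
  · obtain ⟨hu, hkM, hk4⟩ := chk1 _ (eOf_mem m)
    obtain ⟨hu', hkM', hk4'⟩ := chk1 _ (eOf_mem m')
    have hvv : eOf m / 16 = eOf m' / 16 := by rw [← ha2, ← hc2]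
    have hkk : eOf m % 16 = eOf m' % 16 :=
      chk5 _ hk4 _ hk4' _ (encF_lt4 y2) ha3 hc3
    exact eOf_inj (by omega)
  · exfalso
    obtain ⟨hu, hkM, hk4⟩ := chk1 _ (eOf_mem m)
    have hnb := (freeL_mem (gval_mem (encF_lt7 y1) hd2).2).2
    apply hnb
    refine ⟨eOf m % 16, ?_, ?_⟩
    · rw [ha2]
      exact hkM
    · rw [← hd3]
      exact ha3
  · exfalso
    obtain ⟨hu, hkM, hk4⟩ := chk1 _ (eOf_mem m')
    have hnb := (freeL_mem (gval_mem (encF_lt7 y1) hb2).2).2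
    apply hnb
    refine ⟨eOf m' % 16, ?_, ?_⟩
    · rw [hc2]
      exact hkM
    · rw [← hb3]
      exact hc3
  · have hg : gval (eOf m) (encF y1) = gval (eOf m') (encF y1) := by rw [← hb3, ← hd3]
    have hm1 := gval_mem (encF_lt7 y1) hb2
    have hm2 := gval_mem (encF_lt7 y1) hd2
    unfold gval at hg
    rw [List.getD_eq_get _ _ ⟨_, hm1.1⟩, List.getD_eq_get _ _ ⟨_, hm2.1⟩] at hg
    have hfin := (List.Nodup.get_inj_iff (freeL_nodup (encF y1))).mp hg
    have hrk : rk (eOf m) (encF y1) = rk (eOf m') (encF y1) := congrArg Fin.val hfin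
    exact eOf_inj (rk_inj hb2 hd2 hrk)

noncomputable def decod (y1 : Fin 7 → Bool) (y2 : Fin 4 → Bool) : Fin 329 :=
  if h : ∃ m, Plaus y1 y2 m then h.choose else ⟨0, by norm_num⟩

end TS329


theorem two_stage_length_11_size_329 :
    ∃ (n1 n2 : ℕ), 0 < n1 ∧ 0 < n2 ∧ n1 + n2 = 11 ∧
      ∃ (c1 : Fin 329 → (Fin n1 → Bool))
        (c2 : Fin 329 → (Fin n1 → Bool) → (Fin n2 → Bool))
        (dec : (Fin n1 → Bool) → (Fin n2 → Bool) → Fin 329),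
        TwoStageSuccess n1 n2 329 c1 c2 dec := by
  refine ⟨7, 4, by norm_num, by norm_num, rfl, TS329.c1, TS329.c2, TS329.decod, ?_⟩
  intro m y1 y2 h1 h2 h3
  have hp : TS329.Plaus y1 y2 m := ⟨h1, h2, h3⟩
  have hex : ∃ m', TS329.Plaus y1 y2 m' := ⟨m, hp⟩
  rw [TS329.decod, dif_pos hex]
  exact TS329.uniq hex.choose_spec hp
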